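/- Let U, X, Y be finite sets with a distinguished element x₀ ∈ X, and let W assign to each x ∈ X a pmf W(·|x) on Y with W(y|x₀) > 0 for all y. Let P : ℝ → (U × X → ℝ) be a family such that P(μ) is a pmf on U × X for every μ in some neighborhood of 0, for every (u,x) the map μ ↦ P(μ)(u,x) has a derivative at μ = 0, and P(0)(u,x) = q(u)·1{x = x₀} for a pmf q on U with q(u) > 0 for all u ∈ U. Let I(μ) denote the mutual information of the joint function on U × Y given by (u,y) ↦ ∑_{x∈X} P(μ)(u,x)·W(y|x). Then the map μ ↦ I(μ) has a derivative at μ = 0, equal to 0. -/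

import Mathlib

open Real

/-- Mutual information of a joint function `P` on a product of finite alphabets. -/
noncomputable def mutualInfo {U Y : Type*} [Fintype U] [Fintype Y] (P : U → Y → ℝ) : ℝ :=
  ∑ u, ∑ y, P u y *
    (Real.log (P u y) - Real.log (∑ y', P u y') - Real.log (∑ u', P u' y))

theorem stmt_9 {U X Y : Type*} [Fintype U] [Fintype X] [Fintype Y] [DecidableEq X]
    (x₀ : X) (W : X → Y → ℝ)
    (hW0 : ∀ x y, 0 ≤ W x y) (hW1 : ∀ x, ∑ y, W x y = 1) (hWpos : ∀ y, 0 < W x₀ y)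
    (P : ℝ → U × X → ℝ)
    (hpmf : ∀ᶠ μ in nhds (0 : ℝ), (∀ p, 0 ≤ P μ p) ∧ ∑ p, P μ p = 1)
    (hdiff : ∀ u x, DifferentiableAt ℝ (fun μ => P μ (u, x)) 0)
    (q : U → ℝ) (hq0 : ∀ u, 0 ≤ q u) (hq1 : ∑ u, q u = 1) (hqpos : ∀ u, 0 < q u)
    (hP0 : ∀ u x, P 0 (u, x) = q u * (if x = x₀ then 1 else 0)) :
    HasDerivAt (fun μ => mutualInfo (fun (u : U) (y : Y) => ∑ x, P μ (u, x) * W x y)) 0 0 := by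
  classical
  have hPd : ∀ u x, HasDerivAt (fun μ => P μ (u, x)) (deriv (fun μ => P μ (u, x)) 0) 0 :=
    fun u x => (hdiff u x).hasDerivAt
  set D : U → Y → ℝ := fun u y => ∑ x, deriv (fun μ => P μ (u, x)) 0 * W x y with hDdef
  set Dg : U → ℝ := fun u => ∑ y, D u y with hDgdef
  set Dh : Y → ℝ := fun y => ∑ u, D u y with hDhdef
  have hf : ∀ u y, HasDerivAt (fun μ => ∑ x, P μ (u, x) * W x y) (D u y) 0 :=
    fun u y => HasDerivAt.fun_sum fun x _ => (hPd u x).mul_const _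
  have hf0 : ∀ u y, (∑ x, P 0 (u, x) * W x y) = q u * W x₀ y := by
    intro u y
    simp [hP0, ite_mul]
  have hg0 : ∀ u, (∑ y, ∑ x, P 0 (u, x) * W x y) = q u := by
    intro u
    simp only [hf0, ← Finset.mul_sum, hW1, mul_one]
  have hh0 : ∀ y, (∑ u, ∑ x, P 0 (u, x) * W x y) = W x₀ y := by
    intro y
    simp only [hf0, ← Finset.sum_mul, hq1, one_mul]
  have hfpos : ∀ u y, 0 < (∑ x, P 0 (u, x) * W x y) := fun u y => by
    rw [hf0]; exact mul_pos (hqpos u) (hWpos y)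
  have hg : ∀ u, HasDerivAt (fun μ => ∑ y, ∑ x, P μ (u, x) * W x y) (Dg u) 0 :=
    fun u => HasDerivAt.fun_sum fun y _ => hf u y
  have hh : ∀ y, HasDerivAt (fun μ => ∑ u, ∑ x, P μ (u, x) * W x y) (Dh y) 0 :=
    fun y => HasDerivAt.fun_sum fun u _ => hf u y
  -- the total mass is eventually 1, hence the sum of all derivatives vanishes
  have hS : (∑ u, Dg u) = 0 := by
    have h1 : HasDerivAt (fun μ => ∑ u, ∑ y, ∑ x, P μ (u, x) * W x y) (∑ u, Dg u) 0 :=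
      HasDerivAt.fun_sum fun u _ => hg u
    have h2 : (fun μ => ∑ u, ∑ y, ∑ x, P μ (u, x) * W x y) =ᶠ[nhds (0:ℝ)] fun _ => (1:ℝ) := by
      filter_upwards [hpmf] with μ hμ
      calc ∑ u, ∑ y, ∑ x, P μ (u, x) * W x y
          = ∑ u, ∑ x, P μ (u, x) := by
            refine Finset.sum_congr rfl fun u _ => ?_
            rw [Finset.sum_comm]
            simp [← Finset.mul_sum, hW1]
        _ = 1 := by rw [← Fintype.sum_prod_type]; exact hμ.2
    have h3 : HasDerivAt (fun μ => ∑ u, ∑ y, ∑ x, P μ (u, x) * W x y) 0 0 :=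
      (hasDerivAt_const 0 (1:ℝ)).congr_of_eventuallyEq h2
    exact h1.unique h3
  have hSh : (∑ y, Dh y) = 0 := by
    have : (∑ y, Dh y) = ∑ u, Dg u := by
      simp only [hDhdef, hDgdef]
      exact Finset.sum_comm
    rw [this, hS]
  -- derivative of each summand
  have hterm : ∀ u y, HasDerivAt
      (fun μ => (∑ x, P μ (u, x) * W x y) *
        (Real.log (∑ x, P μ (u, x) * W x y) -
         Real.log (∑ y', ∑ x, P μ (u, x) * W x y') -
         Real.log (∑ u', ∑ x, P μ (u', x) * W x y)))
      (D u y - W x₀ y * Dg u - q u * Dh y) 0 := by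
    intro u y
    have hq' := (hqpos u).ne'
    have hW' := (hWpos y).ne'
    have hlf : HasDerivAt (fun μ => Real.log (∑ x, P μ (u, x) * W x y))
        (D u y / (q u * W x₀ y)) 0 := by
      have := (hf u y).log (ne_of_gt (hfpos u y))
      rwa [hf0] at this
    have hlg : HasDerivAt (fun μ => Real.log (∑ y', ∑ x, P μ (u, x) * W x y'))
        (Dg u / q u) 0 := by
      have := (hg u).log (by rw [hg0]; exact hq')
      rwa [hg0] at this
    have hlh : HasDerivAt (fun μ => Real.log (∑ u', ∑ x, P μ (u', x) * W x y))
        (Dh y / W x₀ y) 0 := by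
      have := (hh y).log (by rw [hh0]; exact hW')
      rwa [hh0] at this
    have h := (hf u y).fun_mul ((hlf.fun_sub hlg).fun_sub hlh)
    rw [hf0, hg0, hh0] at h
    refine h.congr_deriv ?_
    rw [Real.log_mul hq' hW']
    field_simp
    ring
  have hI : HasDerivAt (fun μ => mutualInfo (fun (u : U) (y : Y) => ∑ x, P μ (u, x) * W x y))
      (∑ u, ∑ y, (D u y - W x₀ y * Dg u - q u * Dh y)) 0 := by
    simp only [mutualInfo]
    exact HasDerivAt.fun_sum fun u _ => HasDerivAt.fun_sum fun y _ => hterm u y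
  have hV : (∑ u, ∑ y, (D u y - W x₀ y * Dg u - q u * Dh y)) = 0 := by
    have e1 : ∑ u, ∑ y, D u y = 0 := hS
    have e2 : ∑ u, ∑ y, W x₀ y * Dg u = 0 := by
      have : ∀ u, ∑ y, W x₀ y * Dg u = Dg u := by
        intro u
        rw [← Finset.sum_mul, hW1, one_mul]
      simp only [this]
      exact hS
    have e3 : ∑ u, ∑ y, q u * Dh y = 0 := by
      have : ∀ u, ∑ y, q u * Dh y = q u * (∑ y, Dh y) := fun u => (Finset.mul_sum _ _ _).symm
      simp only [this, hSh, mul_zero, Finset.sum_const_zero]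
    simp only [Finset.sum_sub_distrib]
    rw [e1, e2, e3]
    ring
  exact hV ▸ hI
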